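/- Let $g_r \in \mathbb{Z}_2[w_2,w_3,w_4]$ satisfy $g_0=1$, $g_{-1}=g_{-2}=g_{-3}=0$, $g_r = w_2 g_{r-2} + w_3 g_{r-3} + w_4 g_{r-4}$ for $r\geq 1$. Then for every $t\geq 2$, the monomial $w_2^{2^{t-1}-1}$ appears in $g_{2^t-2}$ with nonzero coefficient, and the monomial $w_2^{2^{t-1}-2}w_3$ appears in $g_{2^t-1}$ with nonzero coefficient. In particular, neither $g_{2^t-2}$ nor $g_{2^t-1}$ is divisible by $w_4$. -/
import Mathlib


open MvPolynomial

private lemma aux_zero (p : MvPolynomial (Fin 3) (ZMod 2)) (m : Fin 3 →₀ ℕ) (s : Fin 3)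
    (h : m s = 0) : coeff m (X s * p) = 0 := by
  rw [mul_comm, coeff_mul_X']
  simp [Finsupp.mem_support_iff, h]

private lemma aux_dvd {p : MvPolynomial (Fin 3) (ZMod 2)} {m : Fin 3 →₀ ℕ} {s : Fin 3}
    (h : X s ∣ p) (hm : m s = 0) : coeff m p = 0 := by
  obtain ⟨q, rfl⟩ := h
  exact aux_zero q m s hm

theorem stmt_9 (g : ℤ → MvPolynomial (Fin 3) (ZMod 2))
    (hneg : ∀ r : ℤ, -3 ≤ r → r < 0 → g r = 0)
    (h0 : g 0 = 1)
    (hrec : ∀ r : ℤ, 1 ≤ r →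
      g r = X 0 * g (r - 2) + X 1 * g (r - 3) + X 2 * g (r - 4)) :
    ∀ t : ℕ, 2 ≤ t →
      coeff (Finsupp.single 0 (2 ^ (t - 1) - 1)) (g ((2 : ℤ) ^ t - 2)) = 1 ∧
      coeff (Finsupp.single 0 (2 ^ (t - 1) - 2) + Finsupp.single 1 1)
        (g ((2 : ℤ) ^ t - 1)) = 1 ∧
      ¬ (X 2 : MvPolynomial (Fin 3) (ZMod 2)) ∣ g ((2 : ℤ) ^ t - 2) ∧
      ¬ (X 2 : MvPolynomial (Fin 3) (ZMod 2)) ∣ g ((2 : ℤ) ^ t - 1) := by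
  -- coefficient of w2^a in g(2a) is 1
  have P1 : ∀ a : ℕ, coeff (Finsupp.single 0 a) (g (2 * (a : ℤ))) = 1 := by
    intro a
    induction a with
    | zero => simp [h0]
    | succ a ih =>
        have hr := hrec (2 * ((a : ℤ) + 1)) (by linarith [Int.natCast_nonneg a])
        have e2 : 2 * ((a : ℤ) + 1) - 2 = 2 * a := by ring
        rw [e2] at hr
        push_cast
        rw [hr]
        have hm : (Finsupp.single (0 : Fin 3) (a + 1)) =
            Finsupp.single 0 1 + Finsupp.single 0 a := by
          rw [← Finsupp.single_add]; ring_nf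
        rw [coeff_add, coeff_add, hm, coeff_X_mul, ih,
          aux_zero _ _ 1 (by simp), aux_zero _ _ 2 (by simp)]
        ring
  -- coefficient of w2^a * w3 in g(2a+3)
  have P2 : ∀ a : ℕ, coeff (Finsupp.single 0 a + Finsupp.single 1 1)
      (g (2 * (a : ℤ) + 3)) = if Even a then 1 else 0 := by
    intro a
    induction a with
    | zero =>
        have h1 : g 1 = 0 := by
          have hr := hrec 1 le_rfl
          norm_num at hr
          rw [hneg (-1) (by norm_num) (by norm_num),
            hneg (-2) (by norm_num) (by norm_num),
            hneg (-3) (by norm_num) (by norm_num)] at hr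
          simpa using hr
        have hr := hrec 3 (by norm_num)
        norm_num at hr
        rw [h1, h0, hneg (-1) (by norm_num) (by norm_num)] at hr
        simp only [mul_zero, mul_one, zero_add, add_zero] at hr
        simp [hr, coeff_X]
    | succ a ih =>
        have hr := hrec (2 * ((a : ℤ) + 1) + 3) (by linarith [Int.natCast_nonneg a])
        have e2 : 2 * ((a : ℤ) + 1) + 3 - 2 = 2 * a + 3 := by ring
        have e3 : 2 * ((a : ℤ) + 1) + 3 - 3 = 2 * (a + 1) := by ring
        rw [e2, e3] at hr
        push_cast
        rw [hr, coeff_add, coeff_add]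
        have hm0 : (Finsupp.single (0 : Fin 3) (a + 1) + Finsupp.single 1 1) =
            Finsupp.single 0 1 + (Finsupp.single 0 a + Finsupp.single 1 1) := by
          rw [← add_assoc, ← Finsupp.single_add]; ring_nf
        have hm1 : (Finsupp.single (0 : Fin 3) (a + 1) + Finsupp.single 1 1) =
            Finsupp.single 1 1 + Finsupp.single 0 (a + 1) := by
          rw [add_comm]
        rw [hm1, coeff_X_mul]
        have hp1 : coeff (Finsupp.single (0:Fin 3) (a+1)) (g (2 * ((a:ℤ) + 1))) = 1 := by
          have := P1 (a + 1); push_cast at this; exact this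
        rw [hp1, ← hm1, hm0, coeff_X_mul, ih, aux_zero _ _ 2 (by simp)]
        by_cases h : Even a
        · rw [if_pos h, if_neg (by simp [Nat.even_add_one, h])]
          decide
        · rw [if_neg h, if_pos (by simp [Nat.even_add_one, h])]
          ring
  intro t ht
  -- arithmetic
  have h1 : 1 ≤ t - 1 := by omega
  have hev : 2 ≤ 2 ^ (t - 1) := by
    calc (2:ℕ) = 2 ^ 1 := by norm_num
    _ ≤ 2 ^ (t - 1) := Nat.pow_le_pow_right (by norm_num) h1
  set a1 : ℕ := 2 ^ (t - 1) - 1 with ha1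
  set a2 : ℕ := 2 ^ (t - 1) - 2 with ha2
  have hpow : (2 : ℤ) ^ t = 2 * (2 : ℤ) ^ (t - 1) := by
    rw [← pow_succ']
    congr 1
    omega
  have hc1 : (2 : ℤ) ^ t - 2 = 2 * (a1 : ℤ) := by
    rw [hpow, ha1]
    push_cast [hev]
    push_cast [Nat.cast_sub (by omega : 1 ≤ 2 ^ (t-1))]
    ring
  have hc2 : (2 : ℤ) ^ t - 1 = 2 * (a2 : ℤ) + 3 := by
    rw [hpow, ha2]
    push_cast [Nat.cast_sub hev]
    ring
  have hA : coeff (Finsupp.single 0 a1) (g ((2 : ℤ) ^ t - 2)) = 1 := by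
    rw [hc1]; exact P1 a1
  have ha2even : Even a2 := by
    rw [ha2]
    have h2 : 2 ^ (t - 1) = 2 * 2 ^ (t - 2) := by
      rw [← pow_succ']
      congr 1
      omega
    have h3 : 1 ≤ 2 ^ (t - 2) := Nat.one_le_two_pow
    exact ⟨2 ^ (t - 2) - 1, by omega⟩
  have hB : coeff (Finsupp.single 0 a2 + Finsupp.single 1 1) (g ((2 : ℤ) ^ t - 1)) = 1 := by
    rw [hc2, P2 a2, if_pos ha2even]
  refine ⟨hA, hB, ?_, ?_⟩
  · intro hd
    have := aux_dvd hd (m := Finsupp.single 0 a1) (by simp)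
    rw [hA] at this
    exact one_ne_zero this
  · intro hd
    have := aux_dvd hd (m := Finsupp.single 0 a2 + Finsupp.single 1 1) (by simp)
    rw [hB] at this
    exact one_ne_zero this
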